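/- Let q ≥ 3, r = ℓ = 2, and let Σ = ker(N_{F_{q^2}/F_q}) ⊆ F_{q^2}^×, with b_1, b_2 ∈ F_{q^2}^× of distinct norms, and C_1 = b_1Σ, C_2 = b_2Σ. For any set Ω ⊆ F_{q^2} ∪ {∞} with C_1 ∪ C_2 ⊆ Ω, define H_c = {(x, cx)} and H_∞ = {(0,y)} in F_{q^2}^2, and W_b = {(x, bx^q)}. Then for each c ∈ Ω: if c ∈ C_1, then W_{b_2} intersects H_c trivially and intersects H_d in a 1-dimensional space for exactly the q+1 indices d ∈ C_2; symmetrically for c ∈ C_2 with W_{b_1}; and for c ∉ C_1 ∪ C_2, W_{b_1} intersects H_c trivially and hits exactly the indices in C_1. -/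

import Mathlib

open Polynomial

section AuxStmt18

variable {q : ℕ} {F K : Type*} [Field F] [Field K] [Fintype F] [Fintype K] [Algebra F K]

/-- Fixed points of `x ↦ x ^ q` in `K` lie in the image of `F`. -/
lemma stmt18_fixed (hF : Fintype.card F = q) (hq : 2 ≤ q) {t : K} (ht : t ^ q = t) :
    ∃ a : F, algebraMap F K a = t := by
  classical
  have hPne : (X ^ q - X : K[X]) ≠ 0 := FiniteField.X_pow_card_sub_X_ne_zero K (by omega)
  have hdeg : (X ^ q - X : K[X]).natDegree = q :=
    FiniteField.X_pow_card_sub_X_natDegree_eq K (by omega)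
  have hsub : Finset.univ.image (algebraMap F K) ⊆ (X ^ q - X : K[X]).roots.toFinset := by
    intro x hx
    obtain ⟨a, -, rfl⟩ := Finset.mem_image.mp hx
    rw [Multiset.mem_toFinset, mem_roots hPne]
    simp only [IsRoot.def, eval_sub, eval_pow, eval_X, sub_eq_zero]
    rw [← map_pow]
    congr 1
    rw [← hF]
    exact FiniteField.pow_card a
  have hcard : (X ^ q - X : K[X]).roots.toFinset.card ≤ q := by
    calc (X ^ q - X : K[X]).roots.toFinset.card
        ≤ Multiset.card (X ^ q - X : K[X]).roots := Multiset.toFinset_card_le _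
      _ ≤ (X ^ q - X : K[X]).natDegree := Polynomial.card_roots' _
      _ = q := hdeg
  have himg : (Finset.univ.image (algebraMap F K)).card = q := by
    rw [Finset.card_image_of_injective _ (algebraMap F K).injective, Finset.card_univ, hF]
  have heq : Finset.univ.image (algebraMap F K) = (X ^ q - X : K[X]).roots.toFinset :=
    Finset.eq_of_subset_of_card_le hsub (by omega)
  have ht' : t ∈ (X ^ q - X : K[X]).roots.toFinset := by
    rw [Multiset.mem_toFinset, mem_roots hPne]
    simp [IsRoot.def, sub_eq_zero, ht]
  rw [← heq] at ht'
  obtain ⟨a, -, ha⟩ := Finset.mem_image.mp ht'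
  exact ⟨a, ha⟩

/-- The norm formula for the quadratic extension of finite fields. -/
lemma stmt18_norm (hF : Fintype.card F = q) (hK : Fintype.card K = q ^ 2) (hq : 2 ≤ q)
    (x : K) : algebraMap F K (Algebra.norm F x) = x ^ (q + 1) := by
  classical
  have h2 : (1 : ℕ) < q := by omega
  have hrank : Module.finrank F K = 2 := by
    have h := Module.card_eq_pow_finrank (K := F) (V := K)
    rw [hF, hK] at h
    exact (Nat.pow_right_injective (by omega) h.symm)
  obtain ⟨p, hpchar⟩ := CharP.exists F
  haveI : CharP F p := hpchar
  haveI : CharP K p := charP_of_injective_algebraMap' F p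
  obtain ⟨n, hp, hcardF⟩ := FiniteField.card F p
  haveI : Fact p.Prime := ⟨hp⟩
  have hqpn : q = p ^ (n : ℕ) := by rw [← hF, hcardF]
  set fr : K →+* K := iterateFrobenius K p n with hfrdef
  have hfr : ∀ y : K, fr y = y ^ q := by
    intro y
    rw [hfrdef, iterateFrobenius_def, ← hqpn]
  have hcomm : ∀ a : F, fr (algebraMap F K a) = algebraMap F K a := by
    intro a
    rw [hfr, ← map_pow]
    congr 1
    rw [← hF]
    exact FiniteField.pow_card a
  set frA : K →ₐ[F] K := { toRingHom := fr, commutes' := hcomm } with hfrA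
  have hbij : Function.Bijective frA :=
    Finite.injective_iff_bijective.mp fr.injective
  set σ : K ≃ₐ[F] K := AlgEquiv.ofBijective frA hbij with hσdef
  have hσ : ∀ y : K, σ y = y ^ q := fun y => hfr y
  have hσne : σ ≠ 1 := by
    intro h
    have hfix : ∀ y : K, y ^ q = y := by
      intro y
      have := congrArg (fun τ : K ≃ₐ[F] K => τ y) h
      simpa [hσ y] using this
    have hsurj : Function.Surjective (algebraMap F K) := fun y =>
      stmt18_fixed hF hq (hfix y)
    have hle := Fintype.card_le_of_surjective _ hsurj
    rw [hF, hK] at hle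
    nlinarith
  have hcard2 : Fintype.card (K ≃ₐ[F] K) = 2 := by
    rw [← Nat.card_eq_fintype_card, IsGalois.card_aut_eq_finrank, hrank]
  have huniv : (Finset.univ : Finset (K ≃ₐ[F] K)) = {1, σ} := by
    symm
    apply Finset.eq_univ_of_card
    rw [Finset.card_insert_of_notMem (by simpa using (Ne.symm hσne)),
      Finset.card_singleton, hcard2]
  rw [Algebra.norm_eq_prod_automorphisms, huniv, Finset.prod_pair (Ne.symm hσne)]
  rw [AlgEquiv.one_apply, hσ]
  rw [← pow_succ']

end AuxStmt18

/-- Key two-parity step (`q ≥ 3`, `r = ℓ = 2`): with `Σ = ker(N_{F_{q²}/F_q})`,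
`C₁ = b₁Σ`, `C₂ = b₂Σ` for `b₁, b₂` of distinct norms, and `Ω ⊆ F_{q²} ∪ {∞}`
containing `C₁ ∪ C₂`, each node `c ∈ Ω` admits a repair subspace: for `c ∈ C₁`,
`W_{b₂}` misses `H_c` and meets `H_d` in a line exactly for the `q + 1` indices
`d ∈ C₂`; symmetrically for `c ∈ C₂` with `W_{b₁}`; and for `c ∉ C₁ ∪ C₂` (including
`∞`), `W_{b₁}` misses `H_c` and hits exactly the indices in `C₁`. -/
theorem stmt_18 (q : ℕ) (F K : Type*) [Field F] [Field K] [Fintype F] [Fintype K]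
    [Algebra F K] (hF : Fintype.card F = q) (hK : Fintype.card K = q ^ 2)
    (hq : 3 ≤ q)
    (b₁ b₂ : K) (hb₁ : b₁ ≠ 0) (hb₂ : b₂ ≠ 0)
    (hbnorm : Algebra.norm F b₁ ≠ Algebra.norm F b₂)
    (Sig C₁ C₂ : Set K)
    (hSig : Sig = {x : K | x ≠ 0 ∧ Algebra.norm F x = 1})
    (hC₁ : C₁ = (b₁ * ·) '' Sig) (hC₂ : C₂ = (b₂ * ·) '' Sig)
    (Ω : Set (Option K)) (hΩ : ∀ d ∈ C₁ ∪ C₂, some d ∈ Ω)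
    (H : Option K → Submodule F (K × K))
    (hHs : ∀ c : K, (H (some c) : Set (K × K)) = {p : K × K | p.2 = c * p.1})
    (hHinf : (H none : Set (K × K)) = {p : K × K | p.1 = 0})
    (W : K → Submodule F (K × K))
    (hW : ∀ b : K, (W b : Set (K × K)) = {p : K × K | p.2 = b * p.1 ^ q}) :
    Nat.card ↥C₁ = q + 1 ∧ Nat.card ↥C₂ = q + 1 ∧
      (∀ c : K, some c ∈ Ω → c ∈ C₁ → W b₂ ⊓ H (some c) = ⊥) ∧
      (∀ d : K, Module.finrank F ↥(W b₂ ⊓ H (some d)) = 1 ↔ d ∈ C₂) ∧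
      (∀ c : K, some c ∈ Ω → c ∈ C₂ → W b₁ ⊓ H (some c) = ⊥) ∧
      (∀ d : K, Module.finrank F ↥(W b₁ ⊓ H (some d)) = 1 ↔ d ∈ C₁) ∧
      (∀ c ∈ Ω, (∀ e : K, c = some e → e ∉ C₁ ∪ C₂) → W b₁ ⊓ H c = ⊥) := by
  classical
  have h2q : 2 ≤ q := by omega
  -- norm-one elements are the (q+1)-st roots of unity
  have hnorm1 : ∀ x : K, Algebra.norm F x = 1 ↔ x ^ (q + 1) = 1 := by
    intro x
    constructor
    · intro h
      have hx := stmt18_norm hF hK h2q x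
      rw [h, map_one] at hx
      exact hx.symm
    · intro h
      have hx := stmt18_norm hF hK h2q x
      rw [h] at hx
      exact (algebraMap F K).injective (by rw [hx, map_one])
  have hSig' : Sig = {x : K | x ≠ 0 ∧ x ^ (q + 1) = 1} := by
    rw [hSig]
    ext x
    simp only [Set.mem_setOf_eq]
    exact and_congr_right fun _ => hnorm1 x
  -- arithmetic
  have hfact : q ^ 2 - 1 = (q - 1) * (q + 1) := by
    zify [show (1:ℕ) ≤ q ^ 2 from Nat.one_le_pow _ _ (by omega), show (1:ℕ) ≤ q by omega]
    ring
  -- generator of Kˣ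
  obtain ⟨g, hg⟩ := IsCyclic.exists_generator (α := Kˣ)
  have horder : orderOf g = q ^ 2 - 1 := by
    rw [orderOf_eq_card_of_forall_mem_zpowers hg, Nat.card_eq_fintype_card,
      Fintype.card_units, hK]
  -- key characterization of norm-one elements as (q-1)-st powers
  have key : ∀ s : K, (s ≠ 0 ∧ s ^ (q + 1) = 1) ↔ ∃ y : K, y ≠ 0 ∧ y ^ (q - 1) = s := by
    intro s
    constructor
    · rintro ⟨hs0, hpow⟩
      set u : Kˣ := Units.mk0 s hs0 with hu
      obtain ⟨k, hk⟩ := (mem_powers_iff_mem_zpowers).mpr (hg u)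
      have hupow : u ^ (q + 1) = 1 := by
        ext
        push_cast [hu]
        exact hpow
      have hdvd : (q - 1) * (q + 1) ∣ k * (q + 1) := by
        rw [← hfact, ← horder]
        apply orderOf_dvd_of_pow_eq_one
        rw [pow_mul, show g ^ k = u from hk, hupow]
      have hk' : (q - 1) ∣ k :=
        (Nat.mul_dvd_mul_iff_right (show 0 < q + 1 by omega)).mp hdvd
      obtain ⟨m, rfl⟩ := hk'
      have hgm : ((g ^ m) ^ (q - 1) : Kˣ) = u := by
        rw [← pow_mul, mul_comm m (q - 1)]
        exact hk
      refine ⟨((g ^ m : Kˣ) : K), Units.ne_zero _, ?_⟩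
      calc ((g ^ m : Kˣ) : K) ^ (q - 1) = (((g ^ m) ^ (q - 1) : Kˣ) : K) := by push_cast; ring
        _ = (u : K) := by rw [hgm]
        _ = s := by rw [hu, Units.val_mk0]
    · rintro ⟨y, hy, rfl⟩
      refine ⟨pow_ne_zero _ hy, ?_⟩
      rw [← pow_mul, ← hfact, ← hK]
      exact FiniteField.pow_card_sub_one_eq_one y hy
  -- cardinality of Sig
  have hSigcard : Nat.card ↥Sig = q + 1 := by
    set f : Fin (q + 1) → K := fun i => ((g ^ ((q - 1) * (i : ℕ)) : Kˣ) : K) with hf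
    have hfinj : Function.Injective f := by
      intro i j hij
      have h1 : (g ^ ((q - 1) * (i : ℕ)) : Kˣ) = g ^ ((q - 1) * (j : ℕ)) := Units.ext hij
      have h2 : (q - 1) * (i : ℕ) ≡ (q - 1) * (j : ℕ) [MOD (q - 1) * (q + 1)] := by
        rw [← hfact, ← horder]
        exact pow_eq_pow_iff_modEq.mp h1
      have h3 : (i : ℕ) ≡ (j : ℕ) [MOD q + 1] :=
        Nat.ModEq.mul_left_cancel' (by omega) h2
      have := h3
      rw [Nat.ModEq, Nat.mod_eq_of_lt i.isLt, Nat.mod_eq_of_lt j.isLt] at this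
      exact Fin.ext this
    have hrange : Sig = Set.range f := by
      rw [hSig']
      ext x
      simp only [Set.mem_setOf_eq, Set.mem_range]
      constructor
      · intro hx
        obtain ⟨y, hy, hyx⟩ := (key x).mp hx
        set v : Kˣ := Units.mk0 y hy with hv
        obtain ⟨m, hm⟩ := (mem_powers_iff_mem_zpowers).mpr (hg v)
        refine ⟨⟨m % (q + 1), Nat.mod_lt _ (by omega)⟩, ?_⟩
        have hmod : (q - 1) * (m % (q + 1)) ≡ (q - 1) * m [MOD (q - 1) * (q + 1)] :=
          Nat.ModEq.mul_left' _ (Nat.mod_modEq m (q + 1))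
        have hgeq : (g ^ ((q - 1) * (m % (q + 1))) : Kˣ) = g ^ ((q - 1) * m) := by
          apply pow_eq_pow_iff_modEq.mpr
          rw [horder, hfact]
          exact hmod
        have : ((g ^ ((q - 1) * m) : Kˣ) : K) = x := by
          rw [mul_comm (q - 1) m, pow_mul]
          push_cast [hm]
          rw [hv]
          push_cast
          exact hyx
        simp only [hf]
        rw [hgeq]
        exact this
      · rintro ⟨i, rfl⟩
        constructor
        · exact Units.ne_zero _
        · have : ((g ^ ((q - 1) * (i : ℕ)) : Kˣ) : K) ^ (q + 1)
              = (((g ^ ((q - 1) * (q + 1))) ^ (i : ℕ) : Kˣ) : K) := by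
            push_cast
            rw [← pow_mul, ← pow_mul]
            ring_nf
          rw [hf]
          simp only
          rw [this, ← hfact, ← horder, pow_orderOf_eq_one, one_pow, Units.val_one]
    rw [hrange, Nat.card_congr (Equiv.ofInjective f hfinj).symm]
    simp
  have hC₁card : Nat.card ↥C₁ = q + 1 := by
    rw [hC₁, Nat.card_coe_set_eq,
      Set.ncard_image_of_injective _ (mul_right_injective₀ hb₁), ← Nat.card_coe_set_eq,
      hSigcard]
  have hC₂card : Nat.card ↥C₂ = q + 1 := by
    rw [hC₂, Nat.card_coe_set_eq,
      Set.ncard_image_of_injective _ (mul_right_injective₀ hb₂), ← Nat.card_coe_set_eq,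
      hSigcard]
  -- membership characterization
  have hmem : ∀ b : K, b ≠ 0 → ∀ c : K,
      (c ∈ (b * ·) '' Sig ↔ ∃ x : K, x ≠ 0 ∧ b * x ^ q = c * x) := by
    intro b hb c
    constructor
    · rintro ⟨s, hs, rfl⟩
      rw [hSig'] at hs
      obtain ⟨y, hy, hys⟩ := (key s).mp hs
      refine ⟨y, hy, ?_⟩
      have hyq : y ^ q = s * y := by
        rw [← hys, ← pow_succ]
        congr 1
        omega
      simp only
      rw [hyq]
      ring
    · rintro ⟨x, hx, hxe⟩
      have hs : x ^ (q - 1) ≠ 0 ∧ (x ^ (q - 1)) ^ (q + 1) = 1 := (key _).mpr ⟨x, hx, rfl⟩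
      refine ⟨x ^ (q - 1), by rw [hSig']; exact hs, ?_⟩
      have hxx : b * x ^ (q - 1) * x = c * x := by
        rw [mul_assoc, ← pow_succ, show q - 1 + 1 = q by omega, hxe]
      exact mul_right_cancel₀ hx hxx
  -- membership in the intersection
  have hmemWH : ∀ (b c : K) (p : K × K),
      p ∈ W b ⊓ H (some c) ↔ (p.2 = b * p.1 ^ q ∧ p.2 = c * p.1) := by
    intro b c p
    rw [Submodule.mem_inf, ← SetLike.mem_coe, ← SetLike.mem_coe (p := H (some c)),
      hW b, hHs c]
    rfl
  -- trivial intersection when no solution exists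
  have hbot : ∀ b c : K, ¬(∃ x : K, x ≠ 0 ∧ b * x ^ q = c * x) →
      W b ⊓ H (some c) = ⊥ := by
    intro b c hno
    rw [eq_bot_iff]
    intro p hp
    obtain ⟨h1, h2⟩ := (hmemWH b c p).mp hp
    have hp1 : p.1 = 0 := by
      by_contra hne
      exact hno ⟨p.1, hne, by rw [← h1, h2]⟩
    have hp2 : p.2 = 0 := by rw [h2, hp1, mul_zero]
    rw [Submodule.mem_bot, Prod.ext_iff]
    exact ⟨by simpa using hp1, by simpa using hp2⟩
  -- one-dimensional intersection when a solution exists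
  have hone : ∀ b c : K, b ≠ 0 → (∃ x : K, x ≠ 0 ∧ b * x ^ q = c * x) →
      Module.finrank F ↥(W b ⊓ H (some c)) = 1 := by
    rintro b c hb ⟨x₀, hx0, hx0e⟩
    have hc0 : c ≠ 0 := by
      intro hc
      rw [hc, zero_mul] at hx0e
      exact (mul_ne_zero hb (pow_ne_zero q hx0)) hx0e
    have hspan : W b ⊓ H (some c) = Submodule.span F {((x₀, c * x₀) : K × K)} := by
      apply le_antisymm
      · intro p hp
        obtain ⟨h1, h2⟩ := (hmemWH b c p).mp hp
        by_cases hp1 : p.1 = 0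
        · have hp2 : p.2 = 0 := by rw [h2, hp1, mul_zero]
          have : p = 0 := by
            rw [Prod.ext_iff]
            exact ⟨by simpa using hp1, by simpa using hp2⟩
          rw [this]
          exact Submodule.zero_mem _
        · have e1 : b * p.1 ^ q = c * p.1 := by rw [← h1, h2]
          have e4 : p.1 ^ q * x₀ = p.1 * x₀ ^ q := by
            apply mul_left_cancel₀ (mul_ne_zero hb hc0)
            calc b * c * (p.1 ^ q * x₀) = (b * p.1 ^ q) * (c * x₀) := by ring
              _ = (c * p.1) * (b * x₀ ^ q) := by rw [e1, hx0e]
              _ = b * c * (p.1 * x₀ ^ q) := by ring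
          have htq : (p.1 * x₀⁻¹) ^ q = p.1 * x₀⁻¹ := by
            rw [mul_pow, inv_pow]
            field_simp
            linear_combination e4
          obtain ⟨a, ha⟩ := stmt18_fixed hF h2q htq
          have hx : p.1 = algebraMap F K a * x₀ := by
            rw [ha]
            field_simp
          have hpa : p = a • ((x₀, c * x₀) : K × K) := by
            rw [Prod.ext_iff]
            constructor
            · rw [Prod.smul_fst, Algebra.smul_def]
              exact hx
            · rw [Prod.smul_snd, Algebra.smul_def, h2, hx]
              ring
          rw [hpa]
          exact Submodule.smul_mem _ _ (Submodule.mem_span_singleton_self _)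
      · rw [Submodule.span_le, Set.singleton_subset_iff]
        exact (hmemWH b c _).mpr ⟨hx0e.symm, rfl⟩
    rw [hspan]
    exact finrank_span_singleton (by
      intro h
      exact hx0 (congrArg Prod.fst h))
  -- the iff characterization
  have hiff : ∀ b : K, b ≠ 0 → ∀ d : K,
      (Module.finrank F ↥(W b ⊓ H (some d)) = 1 ↔ d ∈ (b * ·) '' Sig) := by
    intro b hb d
    constructor
    · intro h
      by_contra hd
      rw [hmem b hb] at hd
      rw [hbot b d hd] at h
      simpa using h
    · intro hd
      exact hone b d hb ((hmem b hb d).mp hd)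
  -- disjointness of the cosets
  have hdisj12 : ∀ c : K, c ∈ C₁ → c ∉ C₂ := by
    rintro c h1 h2
    rw [hC₁] at h1
    rw [hC₂] at h2
    obtain ⟨s, hs, rfl⟩ := h1
    obtain ⟨s', hs', he⟩ := h2
    rw [hSig] at hs hs'
    apply hbnorm
    have he' : b₂ * s' = b₁ * s := he
    have : Algebra.norm F (b₂ * s') = Algebra.norm F (b₁ * s) := by rw [he']
    rw [map_mul, map_mul, hs.2, hs'.2, mul_one, mul_one] at this
    exact this.symm
  have hdisj21 : ∀ c : K, c ∈ C₂ → c ∉ C₁ := by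
    intro c h2 h1
    exact hdisj12 c h1 h2
  refine ⟨hC₁card, hC₂card, ?_, ?_, ?_, ?_, ?_⟩
  · intro c _ hc
    apply hbot
    rw [← hmem b₂ hb₂, ← hC₂]
    exact hdisj12 c hc
  · intro d
    rw [hiff b₂ hb₂ d, ← hC₂]
  · intro c _ hc
    apply hbot
    rw [← hmem b₁ hb₁, ← hC₁]
    exact hdisj21 c hc
  · intro d
    rw [hiff b₁ hb₁ d, ← hC₁]
  · intro c _ hc
    match c with
    | none =>
      rw [eq_bot_iff]
      intro p hp
      rw [Submodule.mem_inf, ← SetLike.mem_coe, ← SetLike.mem_coe (p := H none),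
        hW b₁, hHinf] at hp
      obtain ⟨h1, h2⟩ := hp
      have h1' : p.2 = b₁ * p.1 ^ q := h1
      have h2' : p.1 = 0 := h2
      have hsnd : p.2 = 0 := by rw [h1', h2', zero_pow (by omega : q ≠ 0), mul_zero]
      rw [Submodule.mem_bot, Prod.ext_iff]
      exact ⟨by simpa using h2', by simpa using hsnd⟩
    | some e =>
      apply hbot
      rw [← hmem b₁ hb₁, ← hC₁]
      intro he
      exact hc e rfl (Set.mem_union_left _ he)
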